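/- (Lemma 1, middle case.) If b·(b·P/(Q·F) + 1)⁻² < λ < b, then the unique maximizer of u over [0, P] is x* = (Q·F/√b)·(1/√λ − 1/√b), which lies in (0, P), and the maximum value is u(x*) = Q·F·(1 − √(λ/b))² + u₀. -/

import Mathlib

open Real

set_option maxHeartbeats 1000000

/-- Lemma 1, middle case: If `b·(b·P/(Q·F) + 1)⁻² < λ < b`, then the unique
maximizer of `u` over `[0, P]` is `x* = (Q·F/√b)·(1/√λ − 1/√b)`, which lies in `(0, P)`,
and the maximum value is `u(x*) = Q·F·(1 − √(λ/b))² + u₀`. -/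
theorem stmt_4 (Q F G H lam P : ℝ) (hQ : 0 < Q) (hF : 0 < F) (hG : 0 < G)
    (hH : 0 ≤ H) (hlam : 0 < lam) (hP : 0 < P)
    (u : ℝ → ℝ) (hu : ∀ x, u x = Q * x * F * G / (x * G + Q * F + 1) + Q * H - lam * x)
    (b : ℝ) (hb : b = Q * F * G / (Q * F + 1))
    (hlow : b * ((b * P / (Q * F) + 1) ^ 2)⁻¹ < lam) (hhigh : lam < b)
    (xstar : ℝ) (hxstar : xstar = (Q * F / Real.sqrt b) * (1 / Real.sqrt lam - 1 / Real.sqrt b)) :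
    xstar ∈ Set.Ioo 0 P ∧
    IsMaxOn u (Set.Icc 0 P) xstar ∧
    (∀ y ∈ Set.Icc (0 : ℝ) P, IsMaxOn u (Set.Icc 0 P) y → y = xstar) ∧
    u xstar = Q * F * (1 - Real.sqrt (lam / b)) ^ 2 + Q * H := by
  have hc : (0:ℝ) < Q * F + 1 := by positivity
  have hbpos : 0 < b := by rw [hb]; positivity
  have hbc : b * (Q * F + 1) = Q * F * G := by rw [hb]; field_simp
  set sb := Real.sqrt b with hsb_def
  set sl := Real.sqrt lam with hsl_def
  have hsb : 0 < sb := Real.sqrt_pos.mpr hbpos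
  have hsl : 0 < sl := Real.sqrt_pos.mpr hlam
  have hsb2 : sb ^ 2 = b := Real.sq_sqrt hbpos.le
  have hsl2 : sl ^ 2 = lam := Real.sq_sqrt hlam.le
  have hslb : sl < sb := Real.sqrt_lt_sqrt hlam.le hhigh
  have hx_alt : xstar = (Q * F + 1) * (sb - sl) / (G * sl) := by
    rw [hxstar]
    field_simp
    ring_nf
    linear_combination (-(sb - sl) * (Q * F + 1)) * hsb2 - (sb - sl) * hbc
  have hx0 : 0 < xstar := by
    rw [hx_alt]
    exact div_pos (mul_pos hc (by linarith)) (by positivity)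
  have hA : (0:ℝ) < b * P / (Q * F) + 1 := by positivity
  have h2 : b < lam * (b * P / (Q * F) + 1) ^ 2 := by
    rw [← div_eq_mul_inv] at hlow
    exact (div_lt_iff₀ (by positivity)).mp hlow
  have h3 : sb < sl * (b * P / (Q * F) + 1) := by
    have := Real.sqrt_lt_sqrt hbpos.le h2
    rwa [Real.sqrt_mul hlam.le, Real.sqrt_sq hA.le] at this
  have h4 : (Q * F + 1) * (b * P / (Q * F)) = G * P := by
    field_simp
    linear_combination hbc
  have hxP : xstar < P := by
    rw [hx_alt, div_lt_iff₀ (by positivity)]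
    nlinarith [mul_lt_mul_of_pos_left h3 hc]
  have hs1 : G * xstar + (Q * F + 1) = (Q * F + 1) * sb / sl := by
    rw [hx_alt]
    field_simp
    ring
  have hs : lam * (G * xstar + (Q * F + 1)) ^ 2 = Q * F * (Q * F + 1) * G := by
    rw [hs1]
    field_simp
    linear_combination lam * (Q * F + 1) * hsb2 - Q * F * G * hsl2 +
      lam * hbc
  have hden' : 0 < xstar * G + Q * F + 1 := by nlinarith [mul_pos hx0 hG]
  have key : ∀ x : ℝ, 0 ≤ x →
      u xstar - u x = lam * (G * (x - xstar)) ^ 2 / (G * (x * G + Q * F + 1)) := by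
    intro x hx
    have hden : 0 < x * G + Q * F + 1 := by nlinarith [mul_nonneg hx hG.le]
    rw [hu, hu]
    have hprod : ((Q * xstar * F * G / (xstar * G + Q * F + 1) + Q * H - lam * xstar) -
        (Q * x * F * G / (x * G + Q * F + 1) + Q * H - lam * x)) *
        (G * (x * G + Q * F + 1) * (xstar * G + Q * F + 1)) =
        lam * (G * (x - xstar)) ^ 2 * (xstar * G + Q * F + 1) := by
      field_simp
      linear_combination (x - xstar) * hs
    have h5 : (((Q * xstar * F * G / (xstar * G + Q * F + 1) + Q * H - lam * xstar) -
        (Q * x * F * G / (x * G + Q * F + 1) + Q * H - lam * x)) *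
        (G * (x * G + Q * F + 1))) * (xstar * G + Q * F + 1) =
        (lam * (G * (x - xstar)) ^ 2) * (xstar * G + Q * F + 1) := by
      linear_combination hprod
    have h6 := mul_right_cancel₀ hden'.ne' h5
    rw [eq_div_iff (by positivity)]
    linear_combination h6
  refine ⟨⟨hx0, hxP⟩, ?_, ?_, ?_⟩
  · intro y hy
    have h := key y hy.1
    have hden : 0 < y * G + Q * F + 1 := by nlinarith [mul_nonneg hy.1 hG.le]
    have hpos : 0 ≤ lam * (G * (y - xstar)) ^ 2 / (G * (y * G + Q * F + 1)) := by positivity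
    simp only [Set.mem_setOf_eq]
    linarith
  · intro y hy hmax
    have h := key y hy.1
    have hden : 0 < y * G + Q * F + 1 := by nlinarith [mul_nonneg hy.1 hG.le]
    have hle : u xstar ≤ u y := hmax ⟨hx0.le, hxP.le⟩
    have h0 : lam * (G * (y - xstar)) ^ 2 / (G * (y * G + Q * F + 1)) ≤ 0 := by linarith
    have h1 : lam * (G * (y - xstar)) ^ 2 ≤ 0 := by
      by_contra hcon
      push_neg at hcon
      have : 0 < lam * (G * (y - xstar)) ^ 2 / (G * (y * G + Q * F + 1)) := by positivity
      linarith
    have h2 : (G * (y - xstar)) ^ 2 = 0 :=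
      le_antisymm (by nlinarith) (sq_nonneg _)
    have h3 : G * (y - xstar) = 0 := by
      exact pow_eq_zero_iff two_ne_zero |>.mp h2
    rcases mul_eq_zero.mp h3 with h | h
    · exact absurd h hG.ne'
    · linarith
  · rw [hu]
    have hsq : Real.sqrt (lam / b) = sl / sb := Real.sqrt_div hlam.le b
    rw [hsq]
    have e0 : (Q * F + 1) * (sb - sl) / (G * sl) * G + Q * F + 1 = (Q * F + 1) * sb / sl := by
      field_simp; ring
    have hG_eq : G = sb ^ 2 * (Q * F + 1) / (Q * F) := by
      rw [hsb2]
      field_simp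
      linear_combination -hbc
    rw [hx_alt, e0, ← hsl2, hG_eq]
    have hQF : (0:ℝ) < Q * F := by positivity
    field_simp
    ring
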